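/- arXiv:2304.06220 — 4 statements merged into one kernel-verified Lean document; each statement's English description precedes it below -/
import Mathlib

section
/- (MacWilliams identity for complete weight enumerators) Let C be an F_q-linear code of length n and χ a non-trivial additive character of F_q. Define cwe_C({x_a}_{a∈F_q}) := Σ_{u∈C} Π_{a∈F_q} x_a^{n_a(u)}, where n_a(u) is the number of coordinates of u equal to a. Then cwe_{C^⊥}({x_a}) = (1/|C|) · cwe_C( { Σ_{b∈F_q} χ(ab) x_b }_{a∈F_q} ), i.e. cwe of the dual code is obtained by substituting x_a ↦ Σ_b χ(ab) x_b and dividing by |C|. -/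
open Finset
open scoped Classical

noncomputable section

/-- `n_{a,X}(u) = #{ i ∈ X : u_i = a }`. -/
def count {F : Type*} {n : ℕ} (u : Fin n → F) (X : Finset (Fin n)) (a : F) : ℕ :=
  (X.filter (fun i => u i = a)).card

/-- The codewords of a linear code `C ⊆ F^n`, as a finset. -/
def codeFinset {F : Type*} [Field F] [Fintype F] {n : ℕ}
    (C : Submodule F (Fin n → F)) : Finset (Fin n → F) :=
  Finset.univ.filter (· ∈ C)

/-- The dual code `C^⊥ = {v : u·v = 0 for all u ∈ C}`, as a finset. -/
def dualFinset {F : Type*} [Field F] [Fintype F] {n : ℕ}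
    (C : Submodule F (Fin n → F)) : Finset (Fin n → F) :=
  Finset.univ.filter (fun v => ∀ u ∈ C, ∑ i, u i * v i = 0)

lemma addChar_map_sum {F : Type*} [AddCommGroup F] (χ : AddChar F ℂ)
    {ι : Type*} (s : Finset ι) (f : ι → F) :
    χ (∑ i ∈ s, f i) = ∏ i ∈ s, χ (f i) := by
  induction s using Finset.cons_induction with
  | empty => simp
  | cons a s ha ih => rw [Finset.sum_cons, Finset.prod_cons, χ.map_add_eq_mul, ih]

lemma prod_pow_count {F : Type*} [Field F] [Fintype F] {n : ℕ}
    (v : Fin n → F) (f : F → ℂ) :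
    ∏ a : F, f a ^ count v Finset.univ a = ∏ i, f (v i) := by
  rw [← Finset.prod_fiberwise' Finset.univ v f]
  refine Finset.prod_congr rfl fun a _ => ?_
  rw [Finset.prod_const, count]

lemma char_sum_code {F : Type*} [Field F] [Fintype F] {n : ℕ}
    (C : Submodule F (Fin n → F)) (χ : AddChar F ℂ) (hχ : χ ≠ 1) (v : Fin n → F) :
    ∑ u ∈ codeFinset C, χ (∑ i, u i * v i) =
      if v ∈ dualFinset C then (Nat.card C : ℂ) else 0 := by
  split_ifs with hv
  · simp only [dualFinset, Finset.mem_filter, Finset.mem_univ, true_and] at hv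
    have h1 : ∀ u ∈ codeFinset C, χ (∑ i, u i * v i) = 1 := by
      intro u hu
      simp only [codeFinset, Finset.mem_filter] at hu
      rw [hv u hu.2, χ.map_zero_eq_one]
    rw [Finset.sum_congr rfl h1, Finset.sum_const, nsmul_eq_mul, mul_one]
    norm_cast
    rw [codeFinset, Nat.card_eq_fintype_card, Fintype.card_subtype]
  · simp only [dualFinset, Finset.mem_filter, Finset.mem_univ, true_and, not_forall] at hv
    obtain ⟨u0, hu0, hc⟩ := hv
    set c : F := ∑ i, u0 i * v i with hcdef
    obtain ⟨d, hd⟩ := AddChar.ne_one_iff.mp hχ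
    set u1 : Fin n → F := (d * c⁻¹) • u0 with hu1def
    have hu1C : u1 ∈ C := C.smul_mem _ hu0
    have hu1v : ∑ i, u1 i * v i = d := by
      have h2 : ∑ i, u1 i * v i = (d * c⁻¹) * c := by
        rw [hcdef, Finset.mul_sum]
        exact Finset.sum_congr rfl fun i _ => by
          simp only [hu1def, Pi.smul_apply, smul_eq_mul]; ring
      rw [h2]
      field_simp
    have key : ∑ u ∈ codeFinset C, χ d * χ (∑ i, u i * v i) =
        ∑ u ∈ codeFinset C, χ (∑ i, u i * v i) := by
      refine Finset.sum_equiv (Equiv.addRight u1) (fun u => ?_) (fun u hu => ?_)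
      · simp only [codeFinset, Finset.mem_filter, Finset.mem_univ, true_and,
          Equiv.coe_addRight]
        exact ⟨fun h => C.add_mem h hu1C, fun h => by
          simpa using C.sub_mem h hu1C⟩
      · simp only [Equiv.coe_addRight, Pi.add_apply]
        rw [show ∑ i, (u i + u1 i) * v i = (∑ i, u i * v i) + ∑ i, u1 i * v i by
          rw [← Finset.sum_add_distrib]; exact Finset.sum_congr rfl fun i _ => by ring]
        rw [hu1v, χ.map_add_eq_mul, mul_comm]
    have h0 : (χ d - 1) * ∑ u ∈ codeFinset C, χ (∑ i, u i * v i) = 0 := by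
      rw [← Finset.mul_sum] at key
      rw [sub_mul, one_mul, key, sub_self]
    rcases mul_eq_zero.mp h0 with h | h
    · exact absurd (sub_eq_zero.mp h) hd
    · exact h

/-- MacWilliams identity for complete weight enumerators: for every assignment of complex
values to the variables `{x_a}_{a ∈ F_q}`,
`cwe_{C^⊥}({x_a}) = (1/|C|) · cwe_C({∑_b χ(ab) x_b}_a)`. -/
theorem cwe_macwilliams {F : Type*} [Field F] [Fintype F] {n : ℕ}
    (C : Submodule F (Fin n → F)) (χ : AddChar F ℂ) (hχ : χ ≠ 1) (x : F → ℂ) :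
    ∑ v ∈ dualFinset C, ∏ a : F, x a ^ count v Finset.univ a =
      (1 / (Nat.card C : ℂ)) *
        ∑ u ∈ codeFinset C, ∏ a : F, (∑ b : F, χ (a * b) * x b) ^ count u Finset.univ a := by
  have hN : (Nat.card C : ℂ) ≠ 0 := by
    have : 0 < Nat.card C := Nat.card_pos
    exact_mod_cast this.ne'
  have hrhs : ∑ u ∈ codeFinset C, ∏ a : F, (∑ b : F, χ (a * b) * x b) ^ count u Finset.univ a
      = (Nat.card C : ℂ) * ∑ v ∈ dualFinset C, ∏ a : F, x a ^ count v Finset.univ a := by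
    calc ∑ u ∈ codeFinset C, ∏ a : F, (∑ b : F, χ (a * b) * x b) ^ count u Finset.univ a
        = ∑ u ∈ codeFinset C, ∏ i, ∑ b : F, χ (u i * b) * x b := by
          exact Finset.sum_congr rfl fun u _ => prod_pow_count u _
      _ = ∑ u ∈ codeFinset C, ∑ v : Fin n → F, ∏ i, χ (u i * v i) * x (v i) := by
          refine Finset.sum_congr rfl fun u _ => ?_
          exact Fintype.prod_sum fun i b => χ (u i * b) * x b
      _ = ∑ v : Fin n → F, ∑ u ∈ codeFinset C, χ (∑ i, u i * v i) * ∏ i, x (v i) := by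
          rw [Finset.sum_comm]
          refine Finset.sum_congr rfl fun v _ => Finset.sum_congr rfl fun u _ => ?_
          rw [Finset.prod_mul_distrib, addChar_map_sum]
      _ = ∑ v : Fin n → F,
            (if v ∈ dualFinset C then (Nat.card C : ℂ) else 0) * ∏ i, x (v i) := by
          refine Finset.sum_congr rfl fun v _ => ?_
          rw [← Finset.sum_mul, char_sum_code C χ hχ v]
      _ = ∑ v ∈ dualFinset C, (Nat.card C : ℂ) * ∏ i, x (v i) := by
          simp only [ite_mul, zero_mul]
          rw [Finset.sum_ite_mem, Finset.univ_inter]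
      _ = (Nat.card C : ℂ) * ∑ v ∈ dualFinset C, ∏ a : F, x a ^ count v Finset.univ a := by
          rw [Finset.mul_sum]
          exact Finset.sum_congr rfl fun v _ => by rw [prod_pow_count]
  rw [hrhs, one_div, inv_mul_cancel_left₀ hN]
end
end

section
/- (MacWilliams identity for split complete Jacobi polynomials) Let C be an F_q-linear code of length n, χ a non-trivial additive character of F_q, X_1,…,X_ℓ pairwise disjoint sets partitioning {1,…,n}, and T_i ⊆ X_i for each i. Define SCJ_{C,X_1(T_1),…,X_ℓ(T_ℓ)} := Σ_{u∈C} Π_{i=1}^{ℓ} Π_{a∈F_q} x_{X_i,a}^{n_{a,T_i}(u)} · y_{X_i,a}^{n_{a,X_i∖T_i}(u)}. Then SCJ_{C^⊥,X_1(T_1),…,X_ℓ(T_ℓ)}({x_{X_i,a}, y_{X_i,a}}) = (1/|C|) · SCJ_{C,X_1(T_1),…,X_ℓ(T_ℓ)}( { Σ_{b∈F_q} χ(ab) x_{X_i,b}, Σ_{b∈F_q} χ(ab) y_{X_i,b} }_{a∈F_q, 1≤i≤ℓ} ). -/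
open Finset
open scoped Classical

noncomputable section

lemma prod_count' {F : Type*} [Fintype F] {n : ℕ} (v : Fin n → F)
    (S : Finset (Fin n)) (f : F → ℂ) :
    ∏ a : F, f a ^ count v S a = ∏ j ∈ S, f (v j) := by
  rw [← Finset.prod_fiberwise_of_maps_to (g := v) (t := Finset.univ)
      (fun j _ => mem_univ _) (fun j => f (v j))]
  refine Finset.prod_congr rfl fun a _ => ?_
  rw [Finset.prod_congr rfl (fun j hj => by rw [(Finset.mem_filter.mp hj).2]),
    Finset.prod_const, count]

lemma addchar_map_sum {A : Type*} [AddCommGroup A] (χ : AddChar A ℂ)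
    {ι : Type*} (s : Finset ι) (f : ι → A) :
    χ (∑ i ∈ s, f i) = ∏ i ∈ s, χ (f i) := by
  classical
  induction s using Finset.induction with
  | empty => simp
  | insert _ _ h ih => rw [Finset.sum_insert h, Finset.prod_insert h, χ.map_add_eq_mul, ih]

lemma char_sum' {F : Type*} [Field F] [Fintype F] {n : ℕ}
    (C : Submodule F (Fin n → F)) (χ : AddChar F ℂ) (hχ : χ ≠ 1) (v : Fin n → F) :
    ∑ u ∈ codeFinset C, χ (∑ i, u i * v i) =
      if v ∈ dualFinset C then ((codeFinset C).card : ℂ) else 0 := by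
  split_ifs with h
  · have hd := (Finset.mem_filter.mp h).2
    rw [Finset.sum_congr rfl fun u hu => by
      rw [hd u (Finset.mem_filter.mp hu).2, χ.map_zero_eq_one]]
    simp
  · have h' : ¬ ∀ u ∈ C, ∑ i, u i * v i = 0 := fun hh =>
      h (Finset.mem_filter.mpr ⟨Finset.mem_univ _, hh⟩)
    push_neg at h'
    obtain ⟨u1, hu1C, hc⟩ := h'
    obtain ⟨t, ht⟩ := AddChar.ne_one_iff.mp hχ
    set c := ∑ i, u1 i * v i with hcdef
    set u0 : Fin n → F := (t * c⁻¹) • u1 with hu0def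
    have hu0C : u0 ∈ C := C.smul_mem _ hu1C
    have hdot : ∑ i, u0 i * v i = t := by
      have h1 : ∑ i, u0 i * v i = (t * c⁻¹) * c := by
        rw [hcdef, Finset.mul_sum]
        exact Finset.sum_congr rfl fun i _ => by
          simp [hu0def, mul_assoc]
          exact Or.inl (Or.inl hcdef)
      rw [h1, mul_assoc, inv_mul_cancel₀ hc, mul_one]
    have hshift : ∑ u ∈ codeFinset C, χ (∑ i, u i * v i)
        = ∑ u ∈ codeFinset C, χ (∑ i, (u + u0) i * v i) := by
      refine Finset.sum_nbij' (fun u => u - u0) (fun u => u + u0) ?_ ?_ ?_ ?_ ?_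
      · intro u hu
        exact Finset.mem_filter.mpr ⟨Finset.mem_univ _,
          C.sub_mem (Finset.mem_filter.mp hu).2 hu0C⟩
      · intro u hu
        exact Finset.mem_filter.mpr ⟨Finset.mem_univ _,
          C.add_mem (Finset.mem_filter.mp hu).2 hu0C⟩
      · intro u _; simp
      · intro u _; simp
      · intro u _; simp
    have hmul : ∀ u : Fin n → F, χ (∑ i, (u + u0) i * v i) = χ (∑ i, u i * v i) * χ t := by
      intro u
      have : ∑ i, (u + u0) i * v i = (∑ i, u i * v i) + ∑ i, u0 i * v i := by
        simp [add_mul, Finset.sum_add_distrib]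
      rw [this, hdot, χ.map_add_eq_mul]
    rw [Finset.sum_congr rfl (fun u _ => hmul u), ← Finset.sum_mul] at hshift
    have : (∑ u ∈ codeFinset C, χ (∑ i, u i * v i)) * (χ t - 1) = 0 := by
      rw [mul_sub, mul_one, ← hshift, sub_self]
    rcases mul_eq_zero.mp this with h0 | h0
    · exact h0
    · exact absurd (by linear_combination h0) ht

/-- MacWilliams identity for split complete Jacobi polynomials. -/
theorem scj_macwilliams {F : Type*} [Field F] [Fintype F] {n ℓ : ℕ}
    (C : Submodule F (Fin n → F)) (χ : AddChar F ℂ) (hχ : χ ≠ 1)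
    (X T : Fin ℓ → Finset (Fin n))
    (hdisj : ∀ i j, i ≠ j → Disjoint (X i) (X j))
    (hunion : Finset.univ.biUnion X = Finset.univ)
    (hT : ∀ i, T i ⊆ X i)
    (x y : Fin ℓ → F → ℂ) :
    ∑ v ∈ dualFinset C,
        ∏ i, ∏ a : F, x i a ^ count v (T i) a * y i a ^ count v (X i \ T i) a =
      (1 / (Nat.card C : ℂ)) *
        ∑ u ∈ codeFinset C,
          ∏ i, ∏ a : F,
            (∑ b : F, χ (a * b) * x i b) ^ count u (T i) a *
              (∑ b : F, χ (a * b) * y i b) ^ count u (X i \ T i) a := by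
  classical
  have hpart : ∀ j : Fin n, ∃ i, j ∈ X i := by
    intro j
    have hj : j ∈ Finset.univ.biUnion X := by rw [hunion]; exact mem_univ j
    obtain ⟨i, _, hi⟩ := Finset.mem_biUnion.mp hj
    exact ⟨i, hi⟩
  set part : Fin n → Fin ℓ := fun j => (hpart j).choose with hpartdef
  have hmem : ∀ j, j ∈ X (part j) := fun j => (hpart j).choose_spec
  have huniq : ∀ i j, j ∈ X i → part j = i := by
    intro i j hj
    by_contra hne
    exact (Finset.disjoint_left.mp (hdisj _ _ hne) (hmem j)) hj
  have key : ∀ (x y : Fin ℓ → F → ℂ) (v : Fin n → F),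
      (∏ i, ∏ a : F, x i a ^ count v (T i) a * y i a ^ count v (X i \ T i) a)
        = ∏ j, (if j ∈ T (part j) then x (part j) (v j) else y (part j) (v j)) := by
    intro x y v
    have h1 : ∀ i : Fin ℓ,
        (∏ a : F, x i a ^ count v (T i) a * y i a ^ count v (X i \ T i) a)
          = ∏ j ∈ X i, (if j ∈ T i then x i (v j) else y i (v j)) := by
      intro i
      rw [Finset.prod_mul_distrib, prod_count', prod_count', Finset.prod_ite]
      congr 1
      · congr 1
        exact (Finset.filter_mem_eq_inter.trans
          (Finset.inter_eq_right.mpr (hT i))).symm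
      · congr 1
        exact Finset.sdiff_eq_filter _ _
    calc (∏ i, ∏ a : F, x i a ^ count v (T i) a * y i a ^ count v (X i \ T i) a)
        = ∏ i, ∏ j ∈ X i,
            (if j ∈ T (part j) then x (part j) (v j) else y (part j) (v j)) := by
          refine Finset.prod_congr rfl fun i _ => ?_
          rw [h1]
          refine Finset.prod_congr rfl fun j hj => ?_
          rw [huniq i j hj]
      _ = ∏ j ∈ Finset.univ.biUnion X,
            (if j ∈ T (part j) then x (part j) (v j) else y (part j) (v j)) :=
          (Finset.prod_biUnion fun i _ j _ hij => hdisj i j hij).symm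
      _ = _ := by rw [hunion]
  set G : Fin n → F → ℂ :=
    fun j c => if j ∈ T (part j) then x (part j) c else y (part j) c with hG
  have hcard_ne : ((codeFinset C).card : ℂ) ≠ 0 := by
    have h0 : (0 : Fin n → F) ∈ codeFinset C :=
      Finset.mem_filter.mpr ⟨mem_univ _, C.zero_mem⟩
    exact Nat.cast_ne_zero.mpr (Finset.card_ne_zero_of_mem h0)
  have hcardC : (Nat.card C : ℂ) = ((codeFinset C).card : ℂ) := by
    rw [Nat.card_eq_fintype_card]
    norm_cast
    rw [codeFinset]
    exact Fintype.card_subtype _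
  have expand : ∀ u : Fin n → F, (∏ j, ∑ b : F, χ (u j * b) * G j b)
      = ∑ v : Fin n → F, χ (∑ j, u j * v j) * ∏ j, G j (v j) := by
    intro u
    rw [Finset.prod_univ_sum, Fintype.piFinset_univ]
    refine Finset.sum_congr rfl fun v _ => ?_
    rw [addchar_map_sum, ← Finset.prod_mul_distrib]
  have rhs_summand : ∀ u : Fin n → F,
      (∏ i, ∏ a : F, (∑ b : F, χ (a * b) * x i b) ^ count u (T i) a *
          (∑ b : F, χ (a * b) * y i b) ^ count u (X i \ T i) a)
        = ∏ j, ∑ b : F, χ (u j * b) * G j b := by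
    intro u
    rw [key (fun i a => ∑ b : F, χ (a * b) * x i b)
        (fun i a => ∑ b : F, χ (a * b) * y i b) u]
    refine Finset.prod_congr rfl fun j _ => ?_
    simp only [hG]
    split_ifs <;> rfl
  rw [Finset.sum_congr rfl fun u hu => rhs_summand u]
  rw [Finset.sum_congr rfl fun u hu => expand u]
  rw [Finset.sum_comm]
  have : ∀ v : Fin n → F,
      (∑ u ∈ codeFinset C, χ (∑ j, u j * v j) * ∏ j, G j (v j))
        = (if v ∈ dualFinset C then ((codeFinset C).card : ℂ) else 0) *
            ∏ j, G j (v j) := by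
    intro v
    rw [← Finset.sum_mul, char_sum' C χ hχ v]
  rw [Finset.sum_congr rfl fun v _ => this v]
  simp only [ite_mul, zero_mul]
  rw [Finset.sum_ite_mem, Finset.univ_inter, ← Finset.mul_sum, hcardC,
    one_div, ← mul_assoc, inv_mul_cancel₀ hcard_ne, one_mul]
  exact Finset.sum_congr rfl fun v _ => key x y v
end
end

section
/- Let C be an F_q-linear code of length n, let X_1,…,X_ℓ partition {1,…,n}, and let i ∈ X_k for some k. Then the split complete Jacobi polynomial with T_k = {i} and all other T_j = ∅ decomposes as: SCJ_{C,X_1(∅),…,X_k({i}),…,X_ℓ(∅)} = x_{X_k,0} · scwe_{C/i, X_1,…,X_ℓ} + Σ_{0≠a∈F_q} x_{X_k,a} · scwe_{C+i_a, X_1,…,X_ℓ}, where C/i is the shortening of C at coordinate i, and C+i_a is the subcode of codewords whose i-th coordinate equals a, punctured at i (with the partition sets restricted/reindexed after removing coordinate i). -/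
open Finset
open scoped Classical

noncomputable section

/-- Decomposition of the split complete Jacobi polynomial with `T_k = {i}` and all other
`T_j = ∅`: it equals `x_{X_k,0} · scwe(C/i) + ∑_{0 ≠ a} x_{X_k,a} · scwe(C+i_a)`, where the
shortened code `C/i` (resp. the punctured subcode `C+i_a`) is identified with the codewords
of `C` whose `i`-th coordinate is `0` (resp. `a`), counted on the partition sets with the
coordinate `i` removed. -/
theorem scj_single_point_decomposition {F : Type*} [Field F] [Fintype F] {n ℓ : ℕ}
    (C : Submodule F (Fin n → F)) (X : Fin ℓ → Finset (Fin n))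
    (hdisj : ∀ j j', j ≠ j' → Disjoint (X j) (X j'))
    (hunion : Finset.univ.biUnion X = Finset.univ)
    (k : Fin ℓ) (i : Fin n) (hi : i ∈ X k)
    (x y : Fin ℓ → F → ℂ) :
    ∑ u ∈ codeFinset C,
        (∏ j, ∏ a : F, x j a ^ count u (if j = k then {i} else ∅) a) *
          ∏ j, ∏ a : F, y j a ^ count u (X j \ (if j = k then {i} else ∅)) a =
      x k 0 *
          (∑ u ∈ (codeFinset C).filter (fun u => u i = 0),
            ∏ j, ∏ a' : F, y j a' ^ count u ((X j).erase i) a') +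
        ∑ a ∈ Finset.univ \ {(0 : F)}, x k a *
          ∑ u ∈ (codeFinset C).filter (fun u => u i = a),
            ∏ j, ∏ a' : F, y j a' ^ count u ((X j).erase i) a' := by
  have hnotin : ∀ j, j ≠ k → i ∉ X j := fun j hj hmem =>
    Finset.disjoint_left.mp (hdisj j k hj) hmem hi
  set P : (Fin n → F) → ℂ :=
    fun u => ∏ j, ∏ a' : F, y j a' ^ count u ((X j).erase i) a' with hP
  have hyprod : ∀ u : Fin n → F,
      (∏ j, ∏ a : F, y j a ^ count u (X j \ (if j = k then {i} else ∅)) a) = P u := by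
    intro u
    refine Finset.prod_congr rfl fun j _ => Finset.prod_congr rfl fun a _ => ?_
    congr 2
    by_cases hj : j = k
    · subst hj; simp [Finset.erase_eq]
    · simp [hj, Finset.erase_eq_self.mpr (hnotin j hj)]
  have hxprod : ∀ u : Fin n → F,
      (∏ j, ∏ a : F, x j a ^ count u (if j = k then {i} else ∅) a) = x k (u i) := by
    intro u
    rw [Finset.prod_eq_single k]
    · have h1 : ∀ a : F, count u ({i} : Finset (Fin n)) a = if u i = a then 1 else 0 := by
        intro a
        simp [count, Finset.filter_singleton]
        split <;> simp
      simp only [if_true, h1]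
      have h2 : ∀ a : F, x k a ^ (if u i = a then 1 else 0) = if u i = a then x k a else 1 := by
        intro a; split <;> simp
      rw [Finset.prod_congr rfl fun a _ => h2 a]
      simp
    · intro j _ hj
      simp [hj, count]
    · simp
  have key : ∀ a : F,
      ∑ u ∈ (codeFinset C).filter (fun u => u i = a), x k (u i) * P u
        = x k a * ∑ u ∈ (codeFinset C).filter (fun u => u i = a), P u := by
    intro a
    rw [Finset.mul_sum]
    refine Finset.sum_congr rfl fun u hu => ?_
    rw [(Finset.mem_filter.mp hu).2]
  calc ∑ u ∈ codeFinset C,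
        (∏ j, ∏ a : F, x j a ^ count u (if j = k then {i} else ∅) a) *
          ∏ j, ∏ a : F, y j a ^ count u (X j \ (if j = k then {i} else ∅)) a
      = ∑ u ∈ codeFinset C, x k (u i) * P u := by
        refine Finset.sum_congr rfl fun u _ => ?_
        rw [hxprod u, hyprod u]
    _ = ∑ a : F, ∑ u ∈ (codeFinset C).filter (fun u => u i = a), x k (u i) * P u :=
        (Finset.sum_fiberwise _ _ _).symm
    _ = ∑ a : F, x k a * ∑ u ∈ (codeFinset C).filter (fun u => u i = a), P u :=
        Finset.sum_congr rfl fun a _ => key a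
    _ = _ := by
        rw [← Finset.add_sum_erase Finset.univ _ (Finset.mem_univ (0 : F))]
        congr 1
        · simp [Finset.sdiff_singleton_eq_erase]
end
end

section
/- Let P be a homogeneous polynomial of degree n in the 2q variables {x_a, y_a}_{a∈F_q} over ℂ, and define the polarization operator A·P := (1/n) Σ_{a∈F_q} x_a ∂P/∂y_a. If C is an F_q-linear code of length n whose set of codewords of each fixed composition forms a q-colored 1-design (i.e. for every composition s and every a ∈ F_q, the number of codewords of composition s having value a at coordinate i is independent of i), and C contains no nonzero codeword of weight less than 1, then for every i ∈ {1,…,n}: CJ_{C,{i}} = A · cwe_C. -/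
open Finset
open scoped Classical

noncomputable section

open MvPolynomial

section Aux

variable {F : Type*} [Fintype F]

/-- The exponent finsupp corresponding to a composition, supported on the `y` variables. -/
def Dexp (s : F → ℕ) : (F ⊕ F) →₀ ℕ := ∑ b : F, Finsupp.single (Sum.inr b) (s b)

lemma Dexp_apply_inr (s : F → ℕ) (a : F) : Dexp s (Sum.inr a) = s a := by
  classical
  simp [Dexp, Finsupp.finset_sum_apply, Finsupp.single_apply]

lemma Dexp_apply_inl (s : F → ℕ) (a : F) : Dexp s (Sum.inl a) = 0 := by
  classical
  simp [Dexp, Finsupp.finset_sum_apply, Finsupp.single_apply]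

lemma prodX (s : F → ℕ) :
    (∏ b : F, (X (Sum.inr b) : MvPolynomial (F ⊕ F) ℂ) ^ s b) = monomial (Dexp s) 1 := by
  simp_rw [X_pow_eq_monomial, Dexp, monomial_sum_one]

lemma Dexp_sub (s : F → ℕ) (c : F) :
    Dexp (fun b => s b - if c = b then 1 else 0)
      = Dexp s - Finsupp.single (Sum.inr c) 1 := by
  classical
  ext x
  rcases x with a | a
  · rw [Finsupp.tsub_apply]
    simp [Dexp_apply_inl, Finsupp.single_apply]
  · rw [Finsupp.tsub_apply]
    simp only [Dexp_apply_inr, Finsupp.single_apply]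
    by_cases h : c = a <;> simp [h]

end Aux

/-- If the codewords of each fixed composition of `C` form a `q`-colored `1`-design and `C`
has no nonzero codeword of Hamming weight less than `1`, then for every coordinate `i` the
complete Jacobi polynomial `CJ_{C,{i}}` equals the polarization `A · cwe_C`, where
`A·P = (1/n) ∑_a x_a ∂P/∂y_a` (variables `Sum.inl a = x_a`, `Sum.inr a = y_a`). -/
theorem cj_eq_polarized_cwe {F : Type*} [Field F] [Fintype F] {n : ℕ}
    (C : Submodule F (Fin n → F))
    (hdes : ∀ (s : F → ℕ) (a : F) (i j : Fin n),
      ((codeFinset C).filter (fun u => (∀ b, count u Finset.univ b = s b) ∧ u i = a)).card =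
      ((codeFinset C).filter (fun u => (∀ b, count u Finset.univ b = s b) ∧ u j = a)).card)
    (hwt : ∀ u ∈ C, u ≠ 0 → 1 ≤ (Finset.univ.filter (fun i => u i ≠ 0)).card)
    (i : Fin n) :
    (∑ u ∈ codeFinset C, ∏ a : F,
        (X (Sum.inl a) : MvPolynomial (F ⊕ F) ℂ) ^ count u {i} a *
          (X (Sum.inr a) : MvPolynomial (F ⊕ F) ℂ) ^ count u (Finset.univ \ {i}) a) =
      MvPolynomial.C ((n : ℂ))⁻¹ *
        ∑ a : F, (X (Sum.inl a) : MvPolynomial (F ⊕ F) ℂ) *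
          pderiv (Sum.inr a)
            (∑ u ∈ codeFinset C, ∏ b : F,
              (X (Sum.inr b) : MvPolynomial (F ⊕ F) ℂ) ^ count u Finset.univ b) := by
  classical
  set T : Finset (Fin n → F) := codeFinset C with hT
  set cnt : (Fin n → F) → F → ℕ := fun u b => count u Finset.univ b with hcnt
  set g : (F → ℕ) × F → MvPolynomial (F ⊕ F) ℂ :=
    fun p => X (Sum.inl p.2) * monomial (Dexp p.1 - Finsupp.single (Sum.inr p.2) 1) 1 with hg
  -- per-codeword simplification of the left-hand side
  have hL : ∀ u : Fin n → F,
      (∏ a : F, (X (Sum.inl a) : MvPolynomial (F ⊕ F) ℂ) ^ count u {i} a *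
        (X (Sum.inr a) : MvPolynomial (F ⊕ F) ℂ) ^ count u (Finset.univ \ {i}) a)
      = g (cnt u, u i) := by
    intro u
    have h1 : ∀ a, count u {i} a = if u i = a then 1 else 0 := by
      intro a
      simp only [count, Finset.filter_singleton]
      by_cases h : u i = a <;> simp [h]
    have h2 : ∀ a, count u (Finset.univ \ {i}) a = cnt u a - (if u i = a then 1 else 0) := by
      intro a
      have hsplit : cnt u a = count u (Finset.univ \ {i}) a + count u {i} a := by
        rw [hcnt]
        simp only [count]
        rw [← Finset.card_union_of_disjoint (Finset.disjoint_filter_filter Finset.sdiff_disjoint),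
          ← Finset.filter_union, Finset.sdiff_union_of_subset (Finset.subset_univ _)]
      have := h1 a
      omega
    calc (∏ a : F, (X (Sum.inl a) : MvPolynomial (F ⊕ F) ℂ) ^ count u {i} a *
          (X (Sum.inr a) : MvPolynomial (F ⊕ F) ℂ) ^ count u (Finset.univ \ {i}) a)
        = (∏ a : F, (X (Sum.inl a) : MvPolynomial (F ⊕ F) ℂ) ^ (if u i = a then 1 else 0)) *
          (∏ a : F, (X (Sum.inr a) : MvPolynomial (F ⊕ F) ℂ) ^ (cnt u a - if u i = a then 1 else 0)) := by
          rw [← Finset.prod_mul_distrib]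
          exact Finset.prod_congr rfl fun a _ => by rw [h1 a, h2 a]
      _ = g (cnt u, u i) := by
          have hx : (∏ a : F, (X (Sum.inl a) : MvPolynomial (F ⊕ F) ℂ) ^ (if u i = a then 1 else 0))
              = X (Sum.inl (u i)) := by
            rw [Finset.prod_eq_single (u i)]
            · simp
            · intro a _ ha; simp [Ne.symm ha]
            · simp
          have hy : (∏ a : F, (X (Sum.inr a) : MvPolynomial (F ⊕ F) ℂ) ^ (cnt u a - if u i = a then 1 else 0))
              = monomial (Dexp (cnt u) - Finsupp.single (Sum.inr (u i)) 1) 1 := by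
            rw [prodX (fun a => cnt u a - if u i = a then 1 else 0), Dexp_sub]
          rw [hx, hy, hg]
  -- the derivative computation
  have hR : ∀ a : F,
      pderiv (Sum.inr a) (∑ u ∈ T, ∏ b : F,
          (X (Sum.inr b) : MvPolynomial (F ⊕ F) ℂ) ^ count u Finset.univ b)
      = ∑ u ∈ T, monomial (Dexp (cnt u) - Finsupp.single (Sum.inr a) 1) ((cnt u a : ℂ)) := by
    intro a
    rw [map_sum]
    refine Finset.sum_congr rfl fun u _ => ?_
    rw [show (∏ b : F, (X (Sum.inr b) : MvPolynomial (F ⊕ F) ℂ) ^ count u Finset.univ b)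
        = monomial (Dexp (cnt u)) 1 from prodX (cnt u)]
    rw [pderiv_monomial, Dexp_apply_inr, one_mul]
  -- per-codeword: combining the color multiplicities into a sum over coordinates
  have step : ∀ u : Fin n → F,
      (∑ a : F, X (Sum.inl a) *
        monomial (Dexp (cnt u) - Finsupp.single (Sum.inr a) 1) ((cnt u a : ℂ)))
      = ∑ j : Fin n, g (cnt u, u j) := by
    intro u
    have e1 : ∀ a : F, X (Sum.inl a) *
        monomial (Dexp (cnt u) - Finsupp.single (Sum.inr a) 1) ((cnt u a : ℂ))
        = cnt u a • g (cnt u, a) := by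
      intro a
      have : monomial (Dexp (cnt u) - Finsupp.single (Sum.inr a) 1) ((cnt u a : ℂ))
          = cnt u a • monomial (Dexp (cnt u) - Finsupp.single (Sum.inr a) 1) (1 : ℂ) := by
        rw [← map_nsmul]
        norm_num
      rw [this, hg, mul_smul_comm]
    rw [← Finset.sum_fiberwise' Finset.univ u (fun a => g (cnt u, a))]
    refine Finset.sum_congr rfl fun a _ => ?_
    rw [e1 a, Finset.sum_const]
    congr 1
  -- the design property: the sum is independent of the coordinate
  have hkey : ∀ j : Fin n, (∑ u ∈ T, g (cnt u, u j)) = ∑ u ∈ T, g (cnt u, u i) := by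
    intro j
    set φ : Fin n → (Fin n → F) → (F → ℕ) × F := fun k u => (cnt u, u k) with hφ
    set t : Finset ((F → ℕ) × F) := T.image (φ i) ∪ T.image (φ j) with ht
    have hcard : ∀ (p : (F → ℕ) × F) (k l : Fin n),
        (T.filter fun u => φ k u = p).card = (T.filter fun u => φ l u = p).card := by
      intro p k l
      have e : ∀ m : Fin n, T.filter (fun u => φ m u = p)
          = T.filter (fun u => (∀ b, count u Finset.univ b = p.1 b) ∧ u m = p.2) := by
        intro m
        refine Finset.filter_congr fun u _ => ?_
        simp [hφ, hcnt, Prod.ext_iff, _root_.funext_iff]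
      rw [e k, e l]
      exact hdes p.1 p.2 k l
    have hj' : (∑ u ∈ T, g (φ j u))
        = ∑ p ∈ t, ∑ u ∈ T.filter (fun u => φ j u = p), g p :=
      (Finset.sum_fiberwise_of_maps_to'
        (fun u hu => Finset.mem_union_right _ (Finset.mem_image_of_mem _ hu)) _).symm
    have hi' : (∑ u ∈ T, g (φ i u))
        = ∑ p ∈ t, ∑ u ∈ T.filter (fun u => φ i u = p), g p :=
      (Finset.sum_fiberwise_of_maps_to'
        (fun u hu => Finset.mem_union_left _ (Finset.mem_image_of_mem _ hu)) _).symm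
    show (∑ u ∈ T, g (φ j u)) = ∑ u ∈ T, g (φ i u)
    rw [hj', hi']
    refine Finset.sum_congr rfl fun p _ => ?_
    rw [Finset.sum_const, Finset.sum_const, hcard p j i]
  have hn : (n : ℂ) ≠ 0 := Nat.cast_ne_zero.mpr i.pos.ne'
  calc (∑ u ∈ codeFinset C, ∏ a : F,
        (X (Sum.inl a) : MvPolynomial (F ⊕ F) ℂ) ^ count u {i} a *
          (X (Sum.inr a) : MvPolynomial (F ⊕ F) ℂ) ^ count u (Finset.univ \ {i}) a)
      = ∑ u ∈ T, g (cnt u, u i) := Finset.sum_congr rfl fun u _ => hL u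
    _ = MvPolynomial.C ((n : ℂ))⁻¹ * ((n : MvPolynomial (F ⊕ F) ℂ) * ∑ u ∈ T, g (cnt u, u i)) := by
        rw [← mul_assoc, ← MvPolynomial.C_eq_coe_nat, ← C_mul, inv_mul_cancel₀ hn, C_1, one_mul]
    _ = MvPolynomial.C ((n : ℂ))⁻¹ * ∑ j : Fin n, ∑ u ∈ T, g (cnt u, u i) := by
        rw [Finset.sum_const, Finset.card_univ, Fintype.card_fin, nsmul_eq_mul]
    _ = MvPolynomial.C ((n : ℂ))⁻¹ * ∑ j : Fin n, ∑ u ∈ T, g (cnt u, u j) := by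
        rw [Finset.sum_congr rfl fun j _ => (hkey j).symm]
    _ = MvPolynomial.C ((n : ℂ))⁻¹ * ∑ u ∈ T, ∑ j : Fin n, g (cnt u, u j) := by
        rw [Finset.sum_comm]
    _ = MvPolynomial.C ((n : ℂ))⁻¹ * ∑ u ∈ T, ∑ a : F, X (Sum.inl a) *
          monomial (Dexp (cnt u) - Finsupp.single (Sum.inr a) 1) ((cnt u a : ℂ)) := by
        rw [Finset.sum_congr rfl fun u _ => (step u).symm]
    _ = MvPolynomial.C ((n : ℂ))⁻¹ * ∑ a : F, ∑ u ∈ T, X (Sum.inl a) *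
          monomial (Dexp (cnt u) - Finsupp.single (Sum.inr a) 1) ((cnt u a : ℂ)) := by
        rw [Finset.sum_comm]
    _ = MvPolynomial.C ((n : ℂ))⁻¹ *
        ∑ a : F, (X (Sum.inl a) : MvPolynomial (F ⊕ F) ℂ) *
          pderiv (Sum.inr a)
            (∑ u ∈ codeFinset C, ∏ b : F,
              (X (Sum.inr b) : MvPolynomial (F ⊕ F) ℂ) ^ count u Finset.univ b) := by
        refine congrArg _ (Finset.sum_congr rfl fun a _ => ?_)
        rw [hR a, Finset.mul_sum]
end
end
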